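/- arXiv:1508.04387 — 3 statements merged into one kernel-verified Lean document; each statement's English description precedes it below -/
import Mathlib

section
/- Every Friedberg numbering of 𝒫⁽¹⁾ is minimal among computable numberings of 𝒫⁽¹⁾ with respect to reducibility: if ν is a Friedberg numbering and μ is a computable numbering of 𝒫⁽¹⁾ with μ ≤ ν, then ν ≤ μ. -/
/-- The set of all partial computable functions ℕ ⇀ ℕ. -/
def PCF : Set (ℕ →. ℕ) := {f | Nat.Partrec f}

/-- ν is a numbering of A: every value lies in A and ν is onto A. -/
def IsNumbering (A : Set (ℕ →. ℕ)) (ν : ℕ → ℕ →. ℕ) : Prop :=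
  (∀ i, ν i ∈ A) ∧ ∀ f ∈ A, ∃ i, ν i = f

/-- A computable numbering: (i,x) ↦ ν i x is partial computable. -/
def IsCompNumbering (A : Set (ℕ →. ℕ)) (ν : ℕ → ℕ →. ℕ) : Prop :=
  IsNumbering A ν ∧ Partrec₂ ν

/-- A Friedberg numbering: computable and injective. -/
def IsFriedberg (A : Set (ℕ →. ℕ)) (ν : ℕ → ℕ →. ℕ) : Prop :=
  IsCompNumbering A ν ∧ Function.Injective ν

/-- ν is reducible to μ via a total computable function. -/
def Reducible (ν μ : ℕ → ℕ →. ℕ) : Prop :=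
  ∃ f : ℕ → ℕ, Computable f ∧ ∀ n, ν n = μ (f n)

/-- g is a subfunction of f (graph inclusion). -/
def Subfn (g f : ℕ →. ℕ) : Prop := ∀ x y, y ∈ g x → y ∈ f x

/-- g is a finite subfunction of f. -/
def FinSubfn (g f : ℕ →. ℕ) : Prop := g.Dom.Finite ∧ Subfn g f

/-- A sequence of numberings is uniformly c.e. -/
def UniformlyCE (ν : ℕ → ℕ → ℕ →. ℕ) : Prop :=
  Partrec₂ (fun p : ℕ × ℕ => ν p.1 p.2)

/-- Every Friedberg numbering of 𝒫⁽¹⁾ is minimal under reducibility. -/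
theorem friedberg_minimal (ν μ : ℕ → ℕ →. ℕ)
    (hν : IsFriedberg PCF ν) (hμ : IsCompNumbering PCF μ)
    (h : Reducible μ ν) : Reducible ν μ := by
  obtain ⟨f, hf, hfν⟩ := h
  have hsurj : ∀ n, ∃ m, f m = n := by
    intro n
    obtain ⟨m, hm⟩ := hμ.1.2 (ν n) (hν.1.1.1 n)
    exact ⟨m, hν.2 (by rw [← hfν, hm])⟩
  let g : ℕ → ℕ := fun n => Nat.find (hsurj n)
  have hg : Computable g := by
    have hc : Computable₂ (fun n m : ℕ => decide (f m = n)) :=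
      Primrec.eq.decide.to_comp.comp (hf.comp Computable.snd) Computable.fst
    have := Partrec.rfind hc.partrec₂
    apply Partrec.of_eq_tot this
    intro n
    rw [Nat.mem_rfind]
    constructor
    · simpa using Nat.find_spec (hsurj n)
    · intro m hm
      simpa using Nat.find_min (hsurj n) hm
  refine ⟨g, hg, fun n => ?_⟩
  rw [hfν (g n), Nat.find_spec (hsurj n)]
end

section
/- The set 𝒪 of all odd partial functions (partial functions ℕ ⇀ ℕ whose domain is finite of odd cardinality) that are (trivially) computable has a Friedberg numbering. -/
/-- The set of odd partial functions: finite domain of odd cardinality. -/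
def OddPF : Set (ℕ →. ℕ) := {f | f.Dom.Finite ∧ Odd f.Dom.ncard}


namespace OddFried

abbrev DC := (ℕ × ℕ) × List ((ℕ × ℕ) × (ℕ × ℕ))

/-- flatten a list of pairs of pairs -/
def flat2 (l : List ((ℕ × ℕ) × (ℕ × ℕ))) : List (ℕ × ℕ) := l.flatMap fun q => [q.1, q.2]

@[simp] lemma flat2_nil : flat2 [] = [] := rfl
@[simp] lemma flat2_cons (q) (l) : flat2 (q :: l) = q.1 :: q.2 :: flat2 l := rfl

lemma flat2_length (l) : (flat2 l).length = 2 * l.length := by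
  induction l with
  | nil => rfl
  | cons q t ih => simp [flat2_cons, ih]; ring

lemma flat2_injective : Function.Injective flat2 := by
  intro l₁ l₂ h
  induction l₁ generalizing l₂ with
  | nil => cases l₂ with
    | nil => rfl
    | cons q t => simp at h
  | cons q t ih =>
    cases l₂ with
    | nil => simp at h
    | cons q' t' =>
      simp only [flat2_cons, List.cons.injEq] at h
      obtain ⟨h1, h2, h3⟩ := h
      rw [ih h3]
      congr 1
      exact Prod.ext h1 h2

def pairUp : List (ℕ × ℕ) → List ((ℕ × ℕ) × (ℕ × ℕ))
  | a :: b :: t => (a, b) :: pairUp t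
  | _ => []

lemma flat2_pairUp (l : List (ℕ × ℕ)) (h : Even l.length) : flat2 (pairUp l) = l := by
  induction l using pairUp.induct with
  | case1 a b t ih =>
    simp only [List.length_cons] at h
    have : Even t.length := by
      rcases h with ⟨k, hk⟩; exact ⟨k - 1, by omega⟩
    simp [pairUp, flat2_cons, ih this]
  | case2 l hl =>
    match l, hl with
    | [], _ => rfl
    | [a], h' => simp at h
    | a :: b :: t, h' => exact absurd rfl (h' a b t)

/-- build a list of key/value pairs from base `b` and a list of (gap, value) pairs -/
def bk : ℕ → List (ℕ × ℕ) → List (ℕ × ℕ)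
  | _, [] => []
  | b, p :: t => (b + p.1, p.2) :: bk (b + p.1 + 1) t

@[simp] lemma bk_nil (b) : bk b [] = [] := rfl
@[simp] lemma bk_cons (b p t) : bk b (p :: t) = (b + p.1, p.2) :: bk (b + p.1 + 1) t := rfl

lemma bk_length (b l) : (bk b l).length = l.length := by
  induction l generalizing b with
  | nil => rfl
  | cons p t ih => simp [ih]

def KeyLt (p q : ℕ × ℕ) : Prop := p.1 < q.1

lemma bk_le (b l) : ∀ p ∈ bk b l, b ≤ p.1 := by
  induction l generalizing b with
  | nil => simp
  | cons q t ih =>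
    intro p hp
    rcases List.mem_cons.1 hp with hp | hp
    · simp [hp]
    · have := ih (b + q.1 + 1) p hp; omega

lemma bk_sorted (b l) : List.Pairwise KeyLt (bk b l) := by
  induction l generalizing b with
  | nil => simp [List.Pairwise]
  | cons q t ih =>
    refine List.Pairwise.cons ?_ (ih _)
    intro p hp
    have := bk_le (b + q.1 + 1) t p hp
    simp only [KeyLt]; omega

lemma bk_injective (b : ℕ) : ∀ l₁ l₂, bk b l₁ = bk b l₂ → l₁ = l₂ := by
  intro l₁
  induction l₁ generalizing b with
  | nil => intro l₂ h; cases l₂ <;> simp_all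
  | cons p t ih =>
    intro l₂ h
    cases l₂ with
    | nil => simp at h
    | cons q s =>
      simp only [bk_cons, List.cons.injEq, Prod.mk.injEq] at h
      obtain ⟨⟨h1, h2⟩, h3⟩ := h
      have hpq : p.1 = q.1 := by omega
      have := ih (b + p.1 + 1) s (by rw [hpq] at h3 ⊢; exact h3)
      rw [this]
      congr 1
      exact Prod.ext hpq h2

/-- inverse of bk on sorted lists -/
def dl : ℕ → List (ℕ × ℕ) → List (ℕ × ℕ)
  | _, [] => []
  | b, p :: t => (p.1 - b, p.2) :: dl (p.1 + 1) t

lemma dl_length (b l) : (dl b l).length = l.length := by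
  induction l generalizing b with
  | nil => rfl
  | cons p t ih => simp [dl, ih]

lemma bk_dl (b l) (hle : ∀ p ∈ l, b ≤ p.1) (hs : List.Pairwise KeyLt l) :
    bk b (dl b l) = l := by
  induction l generalizing b with
  | nil => rfl
  | cons p t ih =>
    have hb : b ≤ p.1 := hle p (by simp)
    simp only [dl, bk_cons]
    have h1 : b + (p.1 - b) = p.1 := by omega
    rw [h1]
    congr 1
    exact ih (p.1 + 1) (fun q hq => (List.rel_of_pairwise_cons hs hq : p.1 < q.1))
        hs.of_cons


/-! ### lookup lemmas -/

lemma lookup_isSome (a : ℕ) (l : List (ℕ × ℕ)) :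
    (l.lookup a).isSome ↔ a ∈ l.map Prod.fst := by
  induction l with
  | nil => simp [List.lookup]
  | cons p t ih =>
    rcases p with ⟨k, v⟩
    by_cases h : a = k
    · subst h; simp [List.lookup_cons]
    · simp [List.lookup_cons, beq_false_of_ne h, ih, h, Ne.symm h]

lemma lookup_eq_some_iff {l : List (ℕ × ℕ)} (hnd : (l.map Prod.fst).Nodup)
    {a y : ℕ} : l.lookup a = some y ↔ (a, y) ∈ l := by
  induction l with
  | nil => simp [List.lookup]
  | cons p t ih =>
    rcases p with ⟨k, v⟩
    simp only [List.map_cons, List.nodup_cons] at hnd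
    by_cases h : a = k
    · subst h
      rw [List.lookup_cons]
      simp only [beq_self_eq_true, List.mem_cons, Option.some.injEq]
      constructor
      · rintro rfl; exact Or.inl rfl
      · rintro (h' | h')
        · exact (Prod.mk.injEq _ _ _ _ ▸ h' : _ ∧ _).2.symm
        · exact absurd (List.mem_map.2 ⟨(a, y), h', rfl⟩) hnd.1
    · rw [List.lookup_cons]
      simp only [beq_false_of_ne h, ih hnd.2, List.mem_cons]
      constructor
      · intro h'; exact Or.inr h'
      · rintro (h' | h')
        · exact absurd (congrArg Prod.fst h') h
        · exact h'

lemma sorted_nodup_keys {l : List (ℕ × ℕ)} (hs : List.Pairwise KeyLt l) :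
    (l.map Prod.fst).Nodup := by
  have : (l.map Prod.fst).Pairwise (· < ·) := List.pairwise_map.2 hs
  exact this.imp (fun h => Nat.ne_of_lt h)

lemma eq_of_lookup_eq {l₁ l₂ : List (ℕ × ℕ)} (h₁ : List.Pairwise KeyLt l₁)
    (h₂ : List.Pairwise KeyLt l₂) (h : ∀ a, l₁.lookup a = l₂.lookup a) : l₁ = l₂ := by
  haveI : IsAntisymm (ℕ × ℕ) KeyLt :=
    ⟨fun a b hab hba => absurd hba (by simp only [KeyLt] at hab ⊢; omega)⟩
  have nd₁ := sorted_nodup_keys h₁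
  have nd₂ := sorted_nodup_keys h₂
  have hmem : ∀ p : ℕ × ℕ, p ∈ l₁ ↔ p ∈ l₂ := by
    rintro ⟨a, y⟩
    rw [← lookup_eq_some_iff nd₁, ← lookup_eq_some_iff nd₂, h a]
  exact List.Perm.eq_of_pairwise' h₁ h₂
    ((List.perm_ext_iff_of_nodup (nd₁.of_map _) (nd₂.of_map _)).2 hmem)

/-! ### the numbering -/

def dList (n : ℕ) : List (ℕ × ℕ) :=
  (Denumerable.ofNat DC n).1 :: flat2 (Denumerable.ofNat DC n).2

def code (n : ℕ) : List (ℕ × ℕ) := bk 0 (dList n)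

def nu (n : ℕ) : ℕ →. ℕ := fun a => Part.ofOption ((code n).lookup a)

lemma dList_injective : Function.Injective dList := by
  intro m n h
  simp only [dList, List.cons.injEq] at h
  have h2 := flat2_injective h.2
  have : Denumerable.ofNat DC m = Denumerable.ofNat DC n := Prod.ext h.1 h2
  have h3 := congrArg Encodable.encode this
  rwa [Denumerable.encode_ofNat, Denumerable.encode_ofNat] at h3

lemma code_injective : Function.Injective code := by
  intro m n h
  exact dList_injective (bk_injective 0 _ _ h)

lemma code_sorted (n : ℕ) : List.Pairwise KeyLt (code n) := bk_sorted _ _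

lemma code_length_odd (n : ℕ) : Odd (code n).length := by
  rw [code, bk_length, dList, List.length_cons, flat2_length]
  exact ⟨(Denumerable.ofNat DC n).2.length, by ring⟩

lemma nu_dom (n : ℕ) : (nu n).Dom = {a | a ∈ (code n).map Prod.fst} := by
  ext a
  simp only [PFun.Dom, nu, Set.mem_setOf_eq, Part.ofOption_dom, lookup_isSome]

lemma nu_mem_OddPF (n : ℕ) : (nu n).Dom.Finite ∧ Odd (nu n).Dom.ncard := by
  have hset : (nu n).Dom = ↑((code n).map Prod.fst).toFinset := by
    rw [nu_dom]; ext a; simp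
  constructor
  · rw [hset]; exact Finset.finite_toSet _
  · rw [hset, Set.ncard_coe_finset,
      List.toFinset_card_of_nodup (sorted_nodup_keys (code_sorted n)),
      List.length_map]
    exact code_length_odd n

lemma nu_injective : Function.Injective nu := by
  intro m n h
  apply code_injective
  apply eq_of_lookup_eq (code_sorted m) (code_sorted n)
  intro a
  have := congrFun h a
  simp only [nu] at this
  ext y
  rw [← Option.mem_def, ← Option.mem_def, ← Part.mem_ofOption, ← Part.mem_ofOption (o := (code n).lookup a), this]


/-! ### computability -/

def bkStep (s : ℕ × List (ℕ × ℕ)) (p : ℕ × ℕ) : ℕ × List (ℕ × ℕ) :=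
  (s.1 + p.1 + 1, s.2 ++ [(s.1 + p.1, p.2)])

lemma bk_foldl (l : List (ℕ × ℕ)) (b : ℕ) (acc : List (ℕ × ℕ)) :
    (l.foldl bkStep (b, acc)).2 = acc ++ bk b l := by
  induction l generalizing b acc with
  | nil => simp
  | cons p t ih => simp [bkStep, ih, bk_cons]

lemma primrec_flat2 : Primrec flat2 := by
  have hg : Primrec₂ fun (_ : List ((ℕ × ℕ) × ℕ × ℕ)) (q : (ℕ × ℕ) × ℕ × ℕ) =>
      [q.1, q.2] :=
    Primrec.list_cons.comp (Primrec.fst.comp Primrec.snd)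
      (Primrec.list_cons.comp (Primrec.snd.comp Primrec.snd)
        (Primrec.const []))
  exact Primrec.list_flatMap .id hg

lemma primrec_dList : Primrec dList :=
  Primrec.list_cons.comp (Primrec.fst.comp (Primrec.ofNat DC))
    (primrec_flat2.comp (Primrec.snd.comp (Primrec.ofNat DC)))

lemma primrec_bkStep {α : Type} [Primcodable α] :
    Primrec₂ fun (_ : α) (sp : (ℕ × List (ℕ × ℕ)) × ℕ × ℕ) => bkStep sp.1 sp.2 := by
  have h11 : Primrec fun x : α × ((ℕ × List (ℕ × ℕ)) × ℕ × ℕ) => x.2.1.1 :=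
    Primrec.fst.comp (Primrec.fst.comp Primrec.snd)
  have h12 : Primrec fun x : α × ((ℕ × List (ℕ × ℕ)) × ℕ × ℕ) => x.2.1.2 :=
    Primrec.snd.comp (Primrec.fst.comp Primrec.snd)
  have h21 : Primrec fun x : α × ((ℕ × List (ℕ × ℕ)) × ℕ × ℕ) => x.2.2.1 :=
    Primrec.fst.comp (Primrec.snd.comp Primrec.snd)
  have h22 : Primrec fun x : α × ((ℕ × List (ℕ × ℕ)) × ℕ × ℕ) => x.2.2.2 :=
    Primrec.snd.comp (Primrec.snd.comp Primrec.snd)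
  have hadd : Primrec fun x : α × ((ℕ × List (ℕ × ℕ)) × ℕ × ℕ) => x.2.1.1 + x.2.2.1 :=
    Primrec.nat_add.comp h11 h21
  exact Primrec.pair (Primrec.nat_add.comp hadd (Primrec.const 1))
    (Primrec.list_append.comp h12
      (Primrec.list_cons.comp (Primrec.pair hadd h22) (Primrec.const [])))

lemma primrec_code : Primrec code := by
  have h := Primrec.snd.comp
    (Primrec.list_foldl primrec_dList
      (Primrec.const ((0 : ℕ), ([] : List (ℕ × ℕ)))) primrec_bkStep)
  exact h.of_eq fun n => by
    simp only [bk_foldl, List.nil_append, code]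

lemma partrec_nu : Partrec₂ nu := by
  have hl : Primrec fun p : ℕ × ℕ => (code p.1).lookup p.2 :=
    Primrec.listLookup.comp Primrec.snd (primrec_code.comp Primrec.fst)
  exact Computable.ofOption hl.to_comp

/-! ### surjectivity -/

lemma nu_surj {f : ℕ →. ℕ} (hfin : f.Dom.Finite) (hodd : Odd f.Dom.ncard) :
    ∃ n, nu n = f := by
  classical
  set s := hfin.toFinset with hs
  set ks := s.sort (· ≤ ·) with hks
  set val : ℕ → ℕ := fun a => if h : (f a).Dom then (f a).get h else 0 with hval
  set L := ks.map (fun a => (a, val a)) with hL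
  have hkeys : L.map Prod.fst = ks := by
    rw [hL, List.map_map]; exact List.map_id _
  have hsorted : List.Pairwise KeyLt L := by
    have h1 : List.Pairwise (· < ·) ks := (Finset.sortedLT_sort s).pairwise
    rw [hL]
    exact List.pairwise_map.2 h1
  have hlen : L.length = f.Dom.ncard := by
    rw [hL, List.length_map, hks, Finset.length_sort, hs,
      Set.ncard_eq_toFinset_card _ hfin]
  have hlodd : Odd L.length := by rw [hlen]; exact hodd
  obtain ⟨p, rest, hrest⟩ : ∃ p rest, dl 0 L = p :: rest := by
    cases hdl : dl 0 L with
    | nil =>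
      exfalso
      have := dl_length 0 L
      rw [hdl] at this
      rcases hlodd with ⟨k, hk⟩
      simp at this; omega
    | cons p rest => exact ⟨p, rest, rfl⟩
  have hrestlen : Even rest.length := by
    have h1 := dl_length 0 L
    rw [hrest] at h1
    rcases hlodd with ⟨k, hk⟩
    simp only [List.length_cons] at h1
    exact ⟨k, by omega⟩
  refine ⟨Encodable.encode ((p, pairUp rest) : DC), ?_⟩
  have hdList : dList (Encodable.encode ((p, pairUp rest) : DC)) = p :: rest := by
    rw [dList, Denumerable.ofNat_encode, flat2_pairUp rest hrestlen]
  have hcode : code (Encodable.encode ((p, pairUp rest) : DC)) = L := by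
    rw [code, hdList, ← hrest, bk_dl 0 L (fun q _ => Nat.zero_le _) hsorted]
  have hnd : (L.map Prod.fst).Nodup := sorted_nodup_keys hsorted
  funext a
  apply Part.ext
  intro y
  rw [show nu (Encodable.encode ((p, pairUp rest) : DC)) a =
    Part.ofOption ((code (Encodable.encode ((p, pairUp rest) : DC))).lookup a) from rfl,
    Part.mem_ofOption, hcode]
  constructor
  · intro hy
    have hy' : (a, y) ∈ L := (lookup_eq_some_iff hnd).1 hy
    rw [hL] at hy'
    obtain ⟨x, hx, hxy⟩ := List.mem_map.1 hy'
    obtain ⟨rfl, rfl⟩ : x = a ∧ val x = y := by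
      constructor
      · exact congrArg Prod.fst hxy
      · exact congrArg Prod.snd hxy
    have hxs : x ∈ s := (Finset.mem_sort _).1 hx
    have hdom : (f x).Dom := (Set.Finite.mem_toFinset hfin).1 hxs
    rw [hval]
    simp only [hdom, dif_pos]
    exact Part.get_mem hdom
  · intro hy
    have hdom : (f a).Dom := Part.dom_iff_mem.2 ⟨y, hy⟩
    have has : a ∈ s := (Set.Finite.mem_toFinset hfin).2 hdom
    have hak : a ∈ ks := (Finset.mem_sort _).2 has
    have hyv : val a = y := by
      rw [hval]; simp only [hdom, dif_pos]
      exact Part.get_eq_of_mem hy _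
    apply (lookup_eq_some_iff hnd).2
    rw [hL, ← hyv]
    exact List.mem_map.2 ⟨a, hak, rfl⟩

end OddFried

/-- The odd partial functions have a Friedberg numbering. -/
theorem oddPF_friedberg_numbering : ∃ ν : ℕ → ℕ →. ℕ, IsFriedberg OddPF ν := by
  refine ⟨OddFried.nu, ⟨⟨⟨fun i => ⟨(OddFried.nu_mem_OddPF i).1, (OddFried.nu_mem_OddPF i).2⟩,
    fun f hf => OddFried.nu_surj hf.1 hf.2⟩, OddFried.partrec_nu⟩, OddFried.nu_injective⟩⟩
end

section
/- The set 𝒫⁽¹⁾ \ 𝒪 of all partial computable functions that are not odd (i.e., whose domain is infinite or finite of even cardinality) has a computable numbering. -/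
open Nat.Partrec Nat.Partrec.Code

namespace NOdd

/-- the code with index `e`. -/
def cd (e : ℕ) : Code := Denumerable.ofNat Code e

/-- `x` has converged by stage `s`. -/
def conv (e s x : ℕ) : Bool := (evaln s (cd e) x).isSome

/-- first convergence stage (meaningful when `conv e s x`). -/
def time (e s x : ℕ) : ℕ := (List.range (s+1)).findIdx fun t => conv e t x

/-- `x` precedes `z` in the (time, input) lexicographic key order (as seen at stage `s`). -/
def keyb (e s x z : ℕ) : Bool :=
  decide (time e s x < time e s z ∨ (time e s x = time e s z ∧ x < z))

/-- list of elements converged by stage `s`. -/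
def Dlist (e s : ℕ) : List ℕ :=
  (List.range s).filterMap fun z => if conv e s z then some z else none

/-- elements converged by stage `s` with key greater than that of `x`. -/
def Glist (e s x : ℕ) : List ℕ :=
  (List.range s).filterMap fun z => if conv e s z && keyb e s x z then some z else none

/-- commitment predicate. -/
def P (e x s : ℕ) : Bool :=
  conv e s x && (((Dlist e s).length % 2 == 0) || ((Glist e s x).length != 0))

/-- the numbering. -/
def nu (e x : ℕ) : Part ℕ :=
  (Nat.rfind fun s => Part.some (P e x s)).bind fun _ => eval (cd e) x

/-- converged-set as a finset. -/
def Dfin (e s : ℕ) : Finset ℕ := (Dlist e s).toFinset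

variable {e s s' t x z : ℕ}


lemma conv_lt (h : conv e s x = true) : x < s := by
  obtain ⟨y, hy⟩ := Option.isSome_iff_exists.1 h
  exact evaln_bound (x := y) hy


lemma filterMap_if (p : ℕ → Bool) (l : List ℕ) :
    (l.filterMap fun z => if p z then some z else none) = l.filter p := by
  induction l with
  | nil => rfl
  | cons a l ih => by_cases h : p a <;> simp [List.filterMap_cons, h, ih]

lemma Dlist_eq_filter : Dlist e s = (List.range s).filter fun z => conv e s z :=
  filterMap_if _ _

lemma Dlist_nodup : (Dlist e s).Nodup := by
  rw [Dlist_eq_filter]; exact (List.nodup_range).filter _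

lemma mem_Dlist : z ∈ Dlist e s ↔ conv e s z = true := by
  rw [Dlist_eq_filter, List.mem_filter, List.mem_range]
  exact ⟨fun h => h.2, fun h => ⟨conv_lt h, h⟩⟩

lemma conv_mono (h : conv e s x = true) (hs : s ≤ s') : conv e s' x = true := by
  obtain ⟨y, hy⟩ := Option.isSome_iff_exists.1 h
  exact Option.isSome_iff_exists.2 ⟨y, evaln_mono hs hy⟩

lemma conv_dom (h : conv e s x = true) : x ∈ (eval (cd e)).Dom := by
  obtain ⟨y, hy⟩ := Option.isSome_iff_exists.1 h
  exact (PFun.mem_dom _ _).2 ⟨y, evaln_sound hy⟩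

lemma dom_conv (h : x ∈ (eval (cd e)).Dom) : ∃ s, conv e s x = true := by
  obtain ⟨y, hy⟩ := (PFun.mem_dom _ _).1 h
  obtain ⟨k, hk⟩ := evaln_complete.1 hy
  exact ⟨k, Option.isSome_iff_exists.2 ⟨y, hk⟩⟩

lemma time_lt_aux (h : conv e s x = true) :
    (List.range (s+1)).findIdx (fun t => conv e t x) < s + 1 := by
  have := List.findIdx_lt_length_of_exists (xs := List.range (s+1))
    (p := fun t => conv e t x) ⟨s, List.mem_range.2 (Nat.lt_succ_self s), h⟩
  simpa using this

lemma time_le (h : conv e s x = true) : time e s x ≤ s :=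
  Nat.lt_succ_iff.1 (time_lt_aux h)

lemma time_conv (h : conv e s x = true) : conv e (time e s x) x = true := by
  have hlt := time_lt_aux h
  have := List.findIdx_getElem (p := fun t => conv e t x) (xs := List.range (s+1))
    (w := by simpa using hlt)
  simpa [time] using this

lemma time_min (h : conv e s x = true) (ht : t < time e s x) : conv e t x = false := by
  have hts : t < s + 1 := lt_of_lt_of_le ht (le_trans (time_le h) (Nat.le_succ s))
  have := List.not_of_lt_findIdx (p := fun t => conv e t x) (xs := List.range (s+1)) ht
  simp only [List.getElem_range] at this
  simpa using this

lemma time_stable (h : conv e s x = true) (hs : s ≤ s') : time e s' x = time e s x := by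
  have h' : conv e s' x = true := conv_mono h hs
  have hlt : time e s x < (List.range (s'+1)).length := by
    simpa using lt_of_le_of_lt (le_trans (time_le h) hs) (Nat.lt_succ_self s')
  rw [time, List.findIdx_eq hlt]
  constructor
  · simpa using time_conv h
  · intro j hj
    simp only [List.getElem_range]
    simpa using time_min h hj

lemma time_stable' (h : conv e s x = true) (h' : conv e s' x = true) :
    time e s' x = time e s x := by
  rw [← time_stable h (le_max_left s s'), ← time_stable h' (le_max_right s s')]

lemma lt_time (h : conv e s x = true) : x < time e s x :=
  conv_lt (time_conv h)

lemma mem_Dfin : z ∈ Dfin e s ↔ conv e s z = true := by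
  rw [Dfin, List.mem_toFinset, mem_Dlist]

lemma Dlen_eq : (Dlist e s).length = (Dfin e s).card :=
  (List.toFinset_card_of_nodup Dlist_nodup).symm

lemma mem_Glist : z ∈ Glist e s x ↔ (conv e s z = true ∧ keyb e s x z = true) := by
  rw [Glist, filterMap_if, List.mem_filter, List.mem_range, Bool.and_eq_true]
  exact ⟨fun h => h.2, fun h => ⟨conv_lt h.1, h⟩⟩

lemma P_conv (h : P e x s = true) : conv e s x = true := by
  simp only [P, Bool.and_eq_true] at h; exact h.1

lemma glist_nonempty_of_mem (hz : z ∈ Glist e s x) : ((Glist e s x).length != 0) = true := by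
  simp only [bne_iff_ne, ne_eq, List.length_eq_zero_iff]
  intro hnil
  rw [hnil] at hz; exact List.not_mem_nil hz

lemma keyb_stable (hx : conv e s x = true) (hz : conv e s z = true) (hs : s ≤ s') :
    keyb e s' x z = keyb e s x z := by
  simp only [keyb, time_stable hx hs, time_stable hz hs]

lemma P_mono (h : P e x s = true) (hs : s ≤ s') : P e x s' = true := by
  simp only [P, Bool.and_eq_true, Bool.or_eq_true] at h ⊢
  obtain ⟨hc, hrest⟩ := h
  refine ⟨conv_mono hc hs, ?_⟩
  rcases hrest with hpar | hg
  · by_cases hpar' : ((Dlist e s').length % 2 == 0) = true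
    · exact Or.inl hpar'
    · refine Or.inr ?_
      have hsub : Dfin e s ⊆ Dfin e s' := fun z hz => mem_Dfin.2 (conv_mono (mem_Dfin.1 hz) hs)
      have hne : Dfin e s ≠ Dfin e s' := by
        intro hEq
        rw [Dlen_eq, hEq, ← Dlen_eq] at hpar
        exact hpar' hpar
      obtain ⟨z, hz', hzn⟩ := Finset.exists_of_ssubset (ssubset_of_subset_of_ne hsub hne)
      have hcz' : conv e s' z = true := mem_Dfin.1 hz'
      have hcz : ¬ (conv e s z = true) := fun hh => hzn (mem_Dfin.2 hh)
      refine glist_nonempty_of_mem (z := z) (mem_Glist.2 ⟨hcz', ?_⟩)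
      simp only [keyb, decide_eq_true_eq]
      left
      have h1 : time e s' x ≤ s := (time_stable hc hs) ▸ time_le hc
      have h2 : s < time e s' z := by
        by_contra hle
        push_neg at hle
        exact hcz (conv_mono (time_conv hcz') hle)
      omega
  · refine Or.inr ?_
    simp only [bne_iff_ne, ne_eq, List.length_eq_zero_iff] at hg
    obtain ⟨z, hz⟩ := List.exists_mem_of_ne_nil _ hg
    obtain ⟨hcz, hk⟩ := mem_Glist.1 hz
    refine glist_nonempty_of_mem (z := z) (mem_Glist.2 ⟨conv_mono hcz hs, ?_⟩)
    rw [keyb_stable hc hcz hs]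
    exact hk

lemma nu_mem {y : ℕ} : y ∈ nu e x ↔ (∃ s, P e x s = true) ∧ y ∈ eval (cd e) x := by
  rw [nu, Part.mem_bind_iff]
  constructor
  · rintro ⟨n, hn, hy⟩
    have := Nat.rfind_spec hn
    simp only [Part.mem_some_iff] at this
    exact ⟨⟨n, this.symm⟩, hy⟩
  · rintro ⟨⟨s, hP⟩, hy⟩
    classical
    have hex : ∃ s, P e x s = true := ⟨s, hP⟩
    refine ⟨Nat.find hex, Nat.mem_rfind.2 ⟨?_, fun {m} hm => ?_⟩, hy⟩
    · simp [Nat.find_spec hex]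
    · simp [Nat.find_min hex hm]

lemma nu_dom_set : PFun.Dom (nu e) = {x | ∃ s, P e x s = true} := by
  ext x
  refine (PFun.mem_dom (nu e) x).trans ?_
  constructor
  · rintro ⟨y, hy⟩
    exact (nu_mem.1 hy).1
  · rintro ⟨s, hP⟩
    obtain ⟨y, hy⟩ := (PFun.mem_dom _ _).1 (conv_dom (P_conv hP))
    exact ⟨y, nu_mem.2 ⟨⟨s, hP⟩, hy⟩⟩

lemma P_dom (h : P e x s = true) : x ∈ (eval (cd e)).Dom := conv_dom (P_conv h)

/-- A stage by which every element of a finite domain has converged. -/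
lemma exists_full_stage (hfin : (eval (cd e)).Dom.Finite) :
    ∃ s0, ∀ z ∈ (eval (cd e)).Dom, conv e s0 z = true := by
  classical
  have h1 : ∀ z ∈ hfin.toFinset, ∃ sz, conv e sz z = true := fun z hz =>
    dom_conv (hfin.mem_toFinset.1 hz)
  choose g hg using h1
  refine ⟨hfin.toFinset.attach.sup fun z => g z.1 z.2, fun z hz => ?_⟩
  have hz' : z ∈ hfin.toFinset := hfin.mem_toFinset.2 hz
  exact conv_mono (hg z hz')
    (Finset.le_sup (f := fun z : {x // x ∈ hfin.toFinset} => g z.1 z.2)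
      (Finset.mem_attach _ ⟨z, hz'⟩))

/-- If everything has converged by stage `s`, the converged finset is the whole domain. -/
lemma Dfin_eq_dom (hfin : (eval (cd e)).Dom.Finite)
    (hs : ∀ z ∈ (eval (cd e)).Dom, conv e s z = true) :
    Dfin e s = hfin.toFinset := by
  ext z
  rw [mem_Dfin, hfin.mem_toFinset]
  exact ⟨fun h => conv_dom h, fun h => hs z h⟩

lemma Dlen_eq_ncard (hfin : (eval (cd e)).Dom.Finite)
    (hs : ∀ z ∈ (eval (cd e)).Dom, conv e s z = true) :
    (Dlist e s).length = (eval (cd e)).Dom.ncard := by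
  rw [Dlen_eq, Dfin_eq_dom hfin hs, ← Set.ncard_eq_toFinset_card _ hfin]

/-- In the infinite or even-finite cases, every domain element is committed. -/
lemma exists_P_of_not_odd
    (h : ¬((eval (cd e)).Dom.Finite ∧ Odd (eval (cd e)).Dom.ncard))
    (hx : x ∈ (eval (cd e)).Dom) : ∃ s, P e x s = true := by
  by_cases hfin : (eval (cd e)).Dom.Finite
  · -- finite, hence even, case
    have heven : ((eval (cd e)).Dom.ncard % 2 = 0) := by
      rcases Nat.even_or_odd ((eval (cd e)).Dom.ncard) with he | ho
      · exact Nat.even_iff.1 he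
      · exact absurd ⟨hfin, ho⟩ h
    obtain ⟨s0, hs0⟩ := exists_full_stage hfin
    refine ⟨s0, ?_⟩
    simp only [P, Bool.and_eq_true, Bool.or_eq_true]
    refine ⟨hs0 x hx, Or.inl ?_⟩
    rw [Dlen_eq_ncard hfin hs0]
    simpa using heven
  · -- infinite case
    obtain ⟨sx, hsx⟩ := dom_conv hx
    obtain ⟨z, hzdom, hzgt⟩ := (show (eval (cd e)).Dom.Infinite from hfin).exists_gt sx
    obtain ⟨sz, hsz⟩ := dom_conv hzdom
    refine ⟨max sx sz, ?_⟩
    simp only [P, Bool.and_eq_true, Bool.or_eq_true]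
    have hcx : conv e (max sx sz) x = true := conv_mono hsx (le_max_left _ _)
    have hcz : conv e (max sx sz) z = true := conv_mono hsz (le_max_right _ _)
    refine ⟨hcx, Or.inr (glist_nonempty_of_mem (z := z) (mem_Glist.2 ⟨hcz, ?_⟩))⟩
    simp only [keyb, decide_eq_true_eq]
    left
    have h1 : time e (max sx sz) x ≤ sx := (time_stable hsx (le_max_left _ _)) ▸ time_le hsx
    have h2 : z < time e (max sx sz) z := lt_time hcz
    omega

/-- In the odd case, exactly the key-maximal element is left out. -/
lemma odd_case (hfin : (eval (cd e)).Dom.Finite) (hodd : Odd (eval (cd e)).Dom.ncard) :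
    ∃ m ∈ (eval (cd e)).Dom, ∀ x, (∃ s, P e x s = true) ↔
      (x ∈ (eval (cd e)).Dom ∧ x ≠ m) := by
  classical
  obtain ⟨s0, hs0⟩ := exists_full_stage hfin
  have hne : hfin.toFinset.Nonempty := by
    rw [Set.Finite.toFinset_nonempty]
    exact Set.nonempty_of_ncard_ne_zero (by rintro h0; rw [h0] at hodd; simp at hodd)
  obtain ⟨m, hmF, hmax⟩ := hfin.toFinset.exists_max_image
    (fun z => toLex (time e s0 z, z)) hne
  have hmdom : m ∈ (eval (cd e)).Dom := hfin.mem_toFinset.1 hmF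
  refine ⟨m, hmdom, fun x => ⟨?_, ?_⟩⟩
  · rintro ⟨s, hP⟩
    have hcx : conv e s x = true := P_conv hP
    have hxdom : x ∈ (eval (cd e)).Dom := conv_dom hcx
    refine ⟨hxdom, ?_⟩
    rintro rfl
    -- x = m : derive a contradiction from hP
    have htm : time e s x = time e s0 x := time_stable' (hs0 x hxdom) hcx
    have htm_le : time e s0 x ≤ s := htm ▸ time_le hcx
    have hall : ∀ z ∈ (eval (cd e)).Dom, conv e s z = true := by
      intro z hz
      have h1 : time e s0 z ≤ time e s0 x := by
        have := hmax z (hfin.mem_toFinset.2 hz)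
        rcases Prod.Lex.le_iff.1 this with h | h
        · exact le_of_lt h
        · exact le_of_eq h.1
      exact conv_mono (time_conv (hs0 z hz)) (le_trans h1 htm_le)
    simp only [P, Bool.and_eq_true, Bool.or_eq_true] at hP
    rcases hP.2 with hpar | hg
    · rw [Dlen_eq_ncard hfin hall] at hpar
      rw [Nat.odd_iff] at hodd
      simp [hodd] at hpar
    · simp only [bne_iff_ne, ne_eq, List.length_eq_zero_iff] at hg
      obtain ⟨z, hzG⟩ := List.exists_mem_of_ne_nil _ hg
      obtain ⟨hcz, hk⟩ := mem_Glist.1 hzG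
      have hzdom : z ∈ (eval (cd e)).Dom := conv_dom hcz
      have htz : time e s z = time e s0 z := time_stable' (hs0 z hzdom) hcz
      simp only [keyb, htm, htz, decide_eq_true_eq] at hk
      have hlt : toLex (time e s0 x, x) < toLex (time e s0 z, z) :=
        Prod.Lex.lt_iff.2 hk
      exact absurd (hmax z (hfin.mem_toFinset.2 hzdom)) (not_le_of_gt hlt)
  · rintro ⟨hxdom, hxm⟩
    refine ⟨s0, ?_⟩
    simp only [P, Bool.and_eq_true, Bool.or_eq_true]
    refine ⟨hs0 x hxdom, Or.inr (glist_nonempty_of_mem (z := m) (mem_Glist.2 ⟨hs0 m hmdom, ?_⟩))⟩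
    have hle := hmax x (hfin.mem_toFinset.2 hxdom)
    rcases Prod.Lex.le_iff.1 hle with h | h
    · simp only [keyb, decide_eq_true_eq]
      exact Or.inl h
    · obtain ⟨h1, h2⟩ := h
      have : x < m := lt_of_le_of_ne h2 hxm
      simp only [keyb, decide_eq_true_eq]
      exact Or.inr ⟨h1, this⟩

lemma hconv_prim : Primrec fun a : ℕ × ℕ × ℕ => conv a.1 a.2.1 a.2.2 :=
  (Primrec.option_isSome.comp <| primrec_evaln.comp <|
    (((Primrec.fst.comp .snd).pair ((Primrec.ofNat Code).comp .fst)).pair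
      (Primrec.snd.comp .snd))).of_eq (by intro a; rfl)

lemma htime_prim : Primrec fun a : ℕ × ℕ × ℕ => time a.1 a.2.1 a.2.2 := by
  have hf : Primrec fun a : ℕ × ℕ × ℕ => List.range (a.2.1+1) :=
    Primrec.list_range.comp (Primrec.succ.comp (Primrec.fst.comp Primrec.snd))
  have hp : Primrec₂ fun (a : ℕ × ℕ × ℕ) (t : ℕ) => conv a.1 t a.2.2 :=
    (hconv_prim.comp ((Primrec.fst.comp .fst).pair
      (Primrec.snd.pair (Primrec.snd.comp (Primrec.snd.comp .fst))))).to₂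
  exact (Primrec.list_findIdx hf hp).of_eq fun a => rfl

lemma hkeyb_prim : Primrec fun a : (ℕ × ℕ × ℕ) × ℕ => keyb a.1.1 a.1.2.1 a.1.2.2 a.2 := by
  have ht1 : Primrec fun a : (ℕ × ℕ × ℕ) × ℕ => time a.1.1 a.1.2.1 a.1.2.2 :=
    htime_prim.comp Primrec.fst
  have ht2 : Primrec fun a : (ℕ × ℕ × ℕ) × ℕ => time a.1.1 a.1.2.1 a.2 :=
    htime_prim.comp ((Primrec.fst.comp .fst).pair
      ((Primrec.fst.comp (Primrec.snd.comp .fst)).pair Primrec.snd))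
  have h1 : PrimrecPred fun a : (ℕ × ℕ × ℕ) × ℕ =>
      time a.1.1 a.1.2.1 a.1.2.2 < time a.1.1 a.1.2.1 a.2 := Primrec.nat_lt.comp ht1 ht2
  have h2 : PrimrecPred fun a : (ℕ × ℕ × ℕ) × ℕ =>
      time a.1.1 a.1.2.1 a.1.2.2 = time a.1.1 a.1.2.1 a.2 := Primrec.eq.comp ht1 ht2
  have h3 : PrimrecPred fun a : (ℕ × ℕ × ℕ) × ℕ => a.1.2.2 < a.2 :=
    Primrec.nat_lt.comp (Primrec.snd.comp (Primrec.snd.comp .fst)) Primrec.snd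
  exact (h1.or (h2.and h3)).decide.of_eq fun a => by
    simp only [keyb]

lemma hDlen_prim : Primrec fun a : ℕ × ℕ => (Dlist a.1 a.2).length := by
  have hcond : PrimrecPred fun p : (ℕ × ℕ) × ℕ => conv p.1.1 p.1.2 p.2 = true :=
    Primrec.eq.comp (hconv_prim.comp ((Primrec.fst.comp .fst).pair
      ((Primrec.snd.comp .fst).pair Primrec.snd))) (Primrec.const true)
  have hg : Primrec₂ fun (a : ℕ × ℕ) (z : ℕ) =>
      if conv a.1 a.2 z then some z else none :=
    (Primrec.ite hcond (Primrec.option_some.comp Primrec.snd) (Primrec.const none)).to₂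
  exact Primrec.list_length.comp
    (Primrec.listFilterMap (Primrec.list_range.comp Primrec.snd) hg)

lemma hGlen_prim : Primrec fun a : ℕ × ℕ × ℕ => (Glist a.1 a.2.1 a.2.2).length := by
  have hb : Primrec fun p : (ℕ × ℕ × ℕ) × ℕ =>
      (conv p.1.1 p.1.2.1 p.2 && keyb p.1.1 p.1.2.1 p.1.2.2 p.2) :=
    Primrec.and.comp (hconv_prim.comp ((Primrec.fst.comp .fst).pair
      ((Primrec.fst.comp (Primrec.snd.comp .fst)).pair Primrec.snd))) hkeyb_prim
  have hcond : PrimrecPred fun p : (ℕ × ℕ × ℕ) × ℕ =>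
      (conv p.1.1 p.1.2.1 p.2 && keyb p.1.1 p.1.2.1 p.1.2.2 p.2) = true :=
    Primrec.eq.comp hb (Primrec.const true)
  have hg : Primrec₂ fun (a : ℕ × ℕ × ℕ) (z : ℕ) =>
      if conv a.1 a.2.1 z && keyb a.1 a.2.1 a.2.2 z then some z else none :=
    (Primrec.ite hcond (Primrec.option_some.comp Primrec.snd) (Primrec.const none)).to₂
  exact Primrec.list_length.comp
    (Primrec.listFilterMap (Primrec.list_range.comp (Primrec.fst.comp Primrec.snd)) hg)

lemma hP_prim : Primrec fun a : (ℕ × ℕ) × ℕ => P a.1.1 a.1.2 a.2 := by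
  have b1 : Primrec fun a : (ℕ × ℕ) × ℕ => conv a.1.1 a.2 a.1.2 :=
    hconv_prim.comp ((Primrec.fst.comp .fst).pair
      (Primrec.snd.pair (Primrec.snd.comp .fst)))
  have b2 : Primrec fun a : (ℕ × ℕ) × ℕ => ((Dlist a.1.1 a.2).length % 2 == 0) :=
    Primrec.beq.comp (Primrec.nat_mod.comp
      (hDlen_prim.comp ((Primrec.fst.comp .fst).pair Primrec.snd)) (Primrec.const 2))
      (Primrec.const 0)
  have b3 : Primrec fun a : (ℕ × ℕ) × ℕ => ((Glist a.1.1 a.2 a.1.2).length != 0) :=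
    Primrec.not.comp (Primrec.beq.comp
      (hGlen_prim.comp ((Primrec.fst.comp .fst).pair
        (Primrec.snd.pair (Primrec.snd.comp .fst)))) (Primrec.const 0))
  exact (Primrec.and.comp b1 (Primrec.or.comp b2 b3)).of_eq fun a => rfl

lemma nu_partrec : Partrec₂ nu := by
  have hPc : Computable₂ fun (p : ℕ × ℕ) (s : ℕ) => P p.1 p.2 s := hP_prim.to_comp.to₂
  have h1 : Partrec fun p : ℕ × ℕ => Nat.rfind fun s => Part.some (P p.1 p.2 s) :=
    Partrec.rfind hPc.partrec₂
  have h2 : Partrec₂ fun (p : ℕ × ℕ) (_ : ℕ) => eval (cd p.1) p.2 :=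
    (eval_part.comp ((Computable.ofNat Code).comp (Computable.fst.comp Computable.fst))
      (Computable.snd.comp Computable.fst)).to₂
  exact (h1.bind h2).of_eq fun p => rfl

end NOdd

namespace NOdd

/-- The domain of `nu e` in the non-odd cases. -/
lemma nu_dom_eq_of_not_odd {e : ℕ}
    (h : ¬((eval (cd e)).Dom.Finite ∧ Odd (eval (cd e)).Dom.ncard)) :
    PFun.Dom (nu e) = (eval (cd e)).Dom := by
  rw [nu_dom_set]
  ext x
  exact ⟨fun ⟨s, hP⟩ => P_dom hP, fun hx => exists_P_of_not_odd h hx⟩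

lemma nu_mem_target (e : ℕ) : (nu e : ℕ →. ℕ) ∈ PCF \ OddPF := by
  constructor
  · show Nat.Partrec (nu e)
    exact Partrec.nat_iff.1 (nu_partrec.comp (Computable.const e) Computable.id)
  · intro hodd
    by_cases hcase : (eval (cd e)).Dom.Finite ∧ Odd (eval (cd e)).Dom.ncard
    · obtain ⟨m, hm, hchar⟩ := odd_case hcase.1 hcase.2
      have hdom : PFun.Dom (nu e) = (eval (cd e)).Dom \ {m} := by
        rw [nu_dom_set]
        ext x
        rw [Set.mem_setOf_eq, hchar x]
        simp [Set.mem_diff]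
      obtain ⟨hfin, ho⟩ := hodd
      rw [hdom] at ho
      rw [Set.ncard_diff_singleton_of_mem hm] at ho
      have heven : Even ((eval (cd e)).Dom.ncard - 1) := Nat.Odd.sub_odd hcase.2 odd_one
      exact (Nat.not_odd_iff_even.2 heven) ho
    · obtain ⟨hfin, ho⟩ := hodd
      rw [nu_dom_eq_of_not_odd hcase] at hfin ho
      exact hcase ⟨hfin, ho⟩

lemma nu_surj {f : ℕ →. ℕ} (hf : f ∈ PCF \ OddPF) : ∃ e, (nu e : ℕ →. ℕ) = f := by
  obtain ⟨c, hc⟩ := exists_code.1 hf.1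
  refine ⟨Encodable.encode c, ?_⟩
  have hcd : cd (Encodable.encode c) = c := Denumerable.ofNat_encode c
  have hdom : (eval (cd (Encodable.encode c))).Dom = f.Dom := by rw [hcd, hc]
  funext x
  apply Part.ext
  intro y
  rw [nu_mem, hcd, hc]
  constructor
  · exact fun h => h.2
  · intro hy
    refine ⟨?_, hy⟩
    apply exists_P_of_not_odd
    · rw [hdom]
      exact hf.2
    · rw [hdom]
      exact (PFun.mem_dom _ _).2 ⟨y, hy⟩

end NOdd

/-- The non-odd partial computable functions have a computable numbering. -/
theorem nonOdd_computable_numbering :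
    ∃ ν : ℕ → ℕ →. ℕ, IsCompNumbering (PCF \ OddPF) ν :=
  ⟨NOdd.nu, ⟨⟨NOdd.nu_mem_target, fun f hf => NOdd.nu_surj hf⟩, NOdd.nu_partrec⟩⟩
end
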